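/- An additive functor F has vanishing injective stabilization (F̄ = 0, i.e., ker F(ι) = 0 for every embedding ι of every object into an injective) if and only if F preserves monomorphisms. -/

import Mathlib

open CategoryTheory CategoryTheory.Limits

universe u v

/-- `F̄ = 0` (the kernel of `F(ι)` is trivial for every embedding `ι` of any object into
an injective) if and only if `F` preserves monomorphisms. -/
theorem injective_stabilization_eq_zero_iff_preserves_monos
    {𝒜 : Type u} [Category.{v} 𝒜] [Abelian 𝒜] [EnoughInjectives 𝒜]
    (F : 𝒜 ⥤ AddCommGrpCat.{v}) [F.Additive] :
    (∀ ⦃B I : 𝒜⦄ (ι : B ⟶ I), Mono ι → Injective I →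
      ∀ x : F.obj B, F.map ι x = 0 → x = 0) ↔
    (∀ ⦃X Y : 𝒜⦄ (f : X ⟶ Y), Mono f → Mono (F.map f)) := by
  constructor
  · intro h X Y f hf
    haveI := hf
    rw [AddCommGrpCat.mono_iff_injective]
    rw [injective_iff_map_eq_zero]
    intro x hx
    refine h (Injective.ι X) inferInstance inferInstance x ?_
    have hfac : Injective.ι X = f ≫ Injective.factorThru (Injective.ι X) f :=
      (Injective.comp_factorThru _ _).symm
    rw [hfac, F.map_comp, CategoryTheory.comp_apply, hx]
    exact (F.map _).hom.map_zero
  · intro h B I ι hι hI x hx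
    haveI := h ι hι
    have hinj := (AddCommGrpCat.mono_iff_injective (F.map ι)).mp inferInstance
    apply hinj
    simpa using hx
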